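/- In the Dynin-Folland group 𝐇_{n,2}, for any X ∈ ℝ^{2n+1} and (𝒫,𝒬,𝒮) ∈ 𝐇_{n,2}, there exists 𝒬' ∈ ℝ^{2n+1} such that (X,0,0)·(𝒫,𝒬,𝒮) = (0,𝒬',𝒮')·(X⊙𝒫, 0, 0), where 𝒮' = 𝒮 + ⟨𝒬, X⊙((1/2)𝒫)⟩. -/
import Mathlib


noncomputable section

abbrev Hgrp (n : ℕ) := (Fin n → ℝ) × (Fin n → ℝ) × ℝ

def hdot {n : ℕ} (p q : Fin n → ℝ) : ℝ := ∑ i, p i * q i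

/-- The Heisenberg group law on `ℝ^{2n+1}`. -/
def hmul {n : ℕ} (X Y : Hgrp n) : Hgrp n :=
  (X.1 + Y.1, X.2.1 + Y.2.1,
    X.2.2 + Y.2.2 + (1 / 2) * (hdot X.1 Y.2.1 - hdot X.2.1 Y.1))

/-- The Heisenberg Lie bracket on `ℝ^{2n+1}`. -/
def hbr {n : ℕ} (X Y : Hgrp n) : Hgrp n := (0, 0, hdot X.1 Y.2.1 - hdot X.2.1 Y.1)

/-- `ad*(𝒫)(𝒬') = (z'v, -z'u, 0)` for `𝒫 = (u,v,w)`, `𝒬' = (x',y',z')`. -/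
def adstar {n : ℕ} (P Q : Hgrp n) : Hgrp n := (Q.2.2 • P.2.1, -(Q.2.2 • P.1), 0)

/-- The standard inner product on `ℝ^{2n+1}`. -/
def hinner {n : ℕ} (X Y : Hgrp n) : ℝ := hdot X.1 Y.1 + hdot X.2.1 Y.2.1 + X.2.2 * Y.2.2

/-- Elements `(𝒫, 𝒬, 𝒮)` of the Dynin-Folland Lie algebra/group. -/
abbrev DF (n : ℕ) := Hgrp n × Hgrp n × ℝ

/-- The Dynin-Folland Lie bracket. -/
def dfbr {n : ℕ} (A B : DF n) : DF n :=
  (hbr A.1 B.1,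
   (1 / 2 : ℝ) • (adstar A.1 B.2.1 - adstar B.1 A.2.1),
   hinner A.1 B.2.1 - hinner A.2.1 B.1)

/-- The Dynin-Folland group law. -/
def dfmul {n : ℕ} (A B : DF n) : DF n :=
  (hmul A.1 B.1,
   A.2.1 + B.2.1 + (1 / 4 : ℝ) • (adstar A.1 B.2.1 - adstar B.1 A.2.1),
   A.2.2 + B.2.2 + (1 / 2) * (hinner A.1 B.2.1 - hinner A.2.1 B.1)
     - (1 / 8) * hinner (A.2.1 - B.2.1) (hbr A.1 B.1))

lemma hdot_comm {n : ℕ} (p q : Fin n → ℝ) : hdot p q = hdot q p := by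
  simp [hdot, mul_comm]

lemma hdot_add_left {n : ℕ} (p q r : Fin n → ℝ) :
    hdot (p + q) r = hdot p r + hdot q r := by
  simp [hdot, add_mul, Finset.sum_add_distrib]

lemma hdot_add_right {n : ℕ} (p q r : Fin n → ℝ) :
    hdot p (q + r) = hdot p q + hdot p r := by
  simp [hdot, mul_add, Finset.sum_add_distrib]

lemma hdot_smul_left {n : ℕ} (c : ℝ) (p q : Fin n → ℝ) :
    hdot (c • p) q = c * hdot p q := by
  simp [hdot, Finset.mul_sum, mul_assoc]

lemma hdot_smul_right {n : ℕ} (c : ℝ) (p q : Fin n → ℝ) :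
    hdot p (c • q) = c * hdot p q := by
  simp only [hdot, Pi.smul_apply, smul_eq_mul, Finset.mul_sum]
  exact Finset.sum_congr rfl fun i _ => by ring

lemma hdot_neg_right {n : ℕ} (p q : Fin n → ℝ) : hdot p (-q) = -hdot p q := by
  simp [hdot, Finset.sum_neg_distrib]

lemma hdot_neg_left {n : ℕ} (p q : Fin n → ℝ) : hdot (-p) q = -hdot p q := by
  simp [hdot]

lemma hdot_sub_left {n : ℕ} (p q r : Fin n → ℝ) :
    hdot (p - q) r = hdot p r - hdot q r := by
  rw [sub_eq_add_neg, hdot_add_left, hdot_neg_left, sub_eq_add_neg]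

lemma hdot_sub_right {n : ℕ} (p q r : Fin n → ℝ) :
    hdot p (q - r) = hdot p q - hdot p r := by
  rw [sub_eq_add_neg, hdot_add_right, hdot_neg_right, sub_eq_add_neg]

lemma hdot_zero_left {n : ℕ} (q : Fin n → ℝ) : hdot 0 q = 0 := by simp [hdot]

lemma hdot_zero_right {n : ℕ} (q : Fin n → ℝ) : hdot q 0 = 0 := by simp [hdot]

/-- In `𝐇_{n,2}`: `(X,0,0)·(𝒫,𝒬,𝒮) = (0,𝒬',𝒮')·(X⊙𝒫,0,0)` for some `𝒬'`,
where `𝒮' = 𝒮 + ⟨𝒬, X ⊙ ((1/2)𝒫)⟩`. -/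
theorem dynin_folland_master_identity (n : ℕ) (X : Hgrp n) (P Q : Hgrp n) (S : ℝ) :
    ∃ Q' : Hgrp n,
      dfmul ((X, 0, 0) : DF n) ((P, Q, S) : DF n)
        = dfmul ((0, Q', S + hinner Q (hmul X ((1 / 2 : ℝ) • P))) : DF n)
            ((hmul X P, 0, 0) : DF n) := by
  refine ⟨(Q.1 + (Q.2.2 / 4) • (X.2.1 + (X.2.1 + P.2.1)),
          Q.2.1 - (Q.2.2 / 4) • (X.1 + (X.1 + P.1)), Q.2.2), ?_⟩
  have hsplit : ∀ A B : DF n, A.1.1 = B.1.1 → A.1.2.1 = B.1.2.1 → A.1.2.2 = B.1.2.2 →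
      A.2.1.1 = B.2.1.1 → A.2.1.2.1 = B.2.1.2.1 → A.2.1.2.2 = B.2.1.2.2 →
      A.2.2 = B.2.2 → A = B := by
    rintro ⟨⟨a1,a2,a3⟩,⟨b1,b2,b3⟩,c⟩ ⟨⟨a1',a2',a3'⟩,⟨b1',b2',b3'⟩,c'⟩
    dsimp; rintro rfl rfl rfl rfl rfl rfl rfl; rfl
  apply hsplit <;>
    simp only [dfmul, hmul, hinner, adstar, hbr, Prod.fst, Prod.snd,
      Prod.fst_zero, Prod.snd_zero, Prod.fst_add, Prod.snd_add, Prod.fst_sub, Prod.snd_sub,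
      Prod.smul_fst, Prod.smul_snd, hdot_add_left, hdot_add_right, hdot_smul_left,
      hdot_smul_right, hdot_zero_left, hdot_zero_right, hdot_neg_right,
      hdot_neg_left, hdot_sub_left, hdot_sub_right, Prod.fst_neg, Prod.snd_neg,
      smul_zero, add_zero, zero_add, sub_zero, zero_sub, mul_zero, zero_mul, smul_eq_mul,
      neg_zero, smul_neg, smul_add, smul_sub, Pi.zero_apply]
  any_goals (funext i; simp; ring)
  any_goals ring
  all_goals linear_combination (1/2) * hdot_comm X.1 Q.1 + (1/2) * hdot_comm X.2.1 Q.2.1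
        - (Q.2.2/8) * hdot_comm X.1 P.2.1 + (Q.2.2/8) * hdot_comm X.2.1 P.1
        + (Q.2.2/4) * hdot_comm X.2.1 X.1 + (Q.2.2/8) * hdot_comm P.2.1 P.1
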